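/- For n, m ≥ 2, the toll number of the Cartesian product K_n □ K_m equals 2. -/

import Mathlib

open SimpleGraph

/-- A walk `W` between `u` and `v` is a *tolled walk* if either `u = v` and `W` is trivial,
or `u` and `v` are adjacent and `W` is the single-edge walk, or `u ≠ v` are non-adjacent,
`W` has at least one interior vertex, `u` is adjacent exactly to the interior vertex
at position 1 and `v` exactly to the interior vertex at position `W.length - 1`. -/
def IsTolledWalk {V : Type*} (G : SimpleGraph V) {u v : V} (W : G.Walk u v) : Prop :=
  (u = v ∧ W.length = 0) ∨
  (G.Adj u v ∧ W.support = [u, v]) ∨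
  (¬ G.Adj u v ∧ u ≠ v ∧ 2 ≤ W.length ∧
    (∀ i, 0 < i → i < W.length → (G.Adj u (W.support.getD i u) ↔ i = 1)) ∧
    (∀ i, 0 < i → i < W.length → (G.Adj v (W.support.getD i u) ↔ i = W.length - 1)))

/-- The toll interval between `u` and `v`: vertices lying on some tolled walk. -/
def tollInterval {V : Type*} (G : SimpleGraph V) (u v : V) : Set V :=
  {x | ∃ W : G.Walk u v, IsTolledWalk G W ∧ x ∈ W.support}

/-- A toll set: the toll intervals between its pairs cover the vertex set. -/
def IsTollSet {V : Type*} (G : SimpleGraph V) (S : Set V) : Prop :=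
  ∀ x : V, ∃ u ∈ S, ∃ v ∈ S, x ∈ tollInterval G u v

/-- The toll number: minimum size of a toll set. -/
noncomputable def tollNumber {V : Type*} (G : SimpleGraph V) : ℕ :=
  sInf {n | ∃ S : Set V, S.Finite ∧ S.ncard = n ∧ IsTollSet G S}

/-- `v` is a cut vertex if deleting it disconnects the graph. -/
def IsCutVertex {V : Type*} (G : SimpleGraph V) (v : V) : Prop :=
  ¬ (G.induce {w | w ≠ v}).Preconnected

/-- The extreme vertices of `G` with respect to toll convexity. -/
def extremeVertices {V : Type*} (G : SimpleGraph V) : Set V :=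
  {s | ∀ x y : V, x ≠ s → y ≠ s → s ∉ tollInterval G x y}

/-- The lexicographic product of simple graphs. -/
def lexProd {V W : Type*} (G : SimpleGraph V) (H : SimpleGraph W) : SimpleGraph (V × W) where
  Adj a b := G.Adj a.1 b.1 ∨ (a.1 = b.1 ∧ H.Adj a.2 b.2)
  symm := by
    refine ⟨?_⟩
    rintro a b (h | ⟨h1, h2⟩)
    · exact Or.inl h.symm
    · exact Or.inr ⟨h1.symm, h2.symm⟩
  loopless := by
    refine ⟨?_⟩
    rintro a (h | ⟨_, h⟩)
    · exact G.ne_of_adj h rfl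
    · exact H.ne_of_adj h rfl

lemma mem_toll2 {V : Type*} (G : SimpleGraph V) {u v : V} (w x : V)
    (hu : G.Adj u w) (hv : G.Adj w v) (huv : ¬ G.Adj u v) (hne : u ≠ v)
    (hx : x = u ∨ x = w ∨ x = v) : x ∈ tollInterval G u v := by
  refine ⟨Walk.cons hu (Walk.cons hv Walk.nil), Or.inr (Or.inr ⟨huv, hne, by simp, ?_, ?_⟩), ?_⟩
  · intro i h1 h2
    simp only [Walk.length_cons, Walk.length_nil] at h2
    interval_cases i
    simpa using hu
  · intro i h1 h2
    simp only [Walk.length_cons, Walk.length_nil] at h2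
    interval_cases i
    simpa using hv.symm
  · rcases hx with h | h | h <;> simp [h]

lemma mem_toll3 {V : Type*} (G : SimpleGraph V) {u v : V} (w1 w2 x : V)
    (hu : G.Adj u w1) (h12 : G.Adj w1 w2) (hv : G.Adj w2 v)
    (hu2 : ¬ G.Adj u w2) (hv1 : ¬ G.Adj v w1)
    (huv : ¬ G.Adj u v) (hne : u ≠ v)
    (hx : x = u ∨ x = w1 ∨ x = w2 ∨ x = v) : x ∈ tollInterval G u v := by
  refine ⟨Walk.cons hu (Walk.cons h12 (Walk.cons hv Walk.nil)),
    Or.inr (Or.inr ⟨huv, hne, by simp, ?_, ?_⟩), ?_⟩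
  · intro i h1 h2
    simp only [Walk.length_cons, Walk.length_nil] at h2
    interval_cases i <;> simp [hu, hu2, List.getD]
  · intro i h1 h2
    simp only [Walk.length_cons, Walk.length_nil] at h2
    interval_cases i <;> simp [hv.symm, hv1, List.getD]
  · rcases hx with h | h | h | h <;> simp [h]

lemma mem_toll4 {V : Type*} (G : SimpleGraph V) {u v : V} (w1 w2 w3 x : V)
    (hu : G.Adj u w1) (h12 : G.Adj w1 w2) (h23 : G.Adj w2 w3) (hv : G.Adj w3 v)
    (hu2 : ¬ G.Adj u w2) (hu3 : ¬ G.Adj u w3)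
    (hv1 : ¬ G.Adj v w1) (hv2 : ¬ G.Adj v w2)
    (huv : ¬ G.Adj u v) (hne : u ≠ v)
    (hx : x = u ∨ x = w1 ∨ x = w2 ∨ x = w3 ∨ x = v) : x ∈ tollInterval G u v := by
  refine ⟨Walk.cons hu (Walk.cons h12 (Walk.cons h23 (Walk.cons hv Walk.nil))),
    Or.inr (Or.inr ⟨huv, hne, by simp, ?_, ?_⟩), ?_⟩
  · intro i h1 h2
    simp only [Walk.length_cons, Walk.length_nil] at h2
    interval_cases i <;> simp [hu, hu2, hu3, List.getD]
  · intro i h1 h2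
    simp only [Walk.length_cons, Walk.length_nil] at h2
    interval_cases i <;> simp [hv.symm, hv1, hv2, List.getD]
  · rcases hx with h | h | h | h | h <;> simp [h]

lemma key {n m : ℕ} (a0 a1 : Fin n) (b0 b1 : Fin m) (han : a0 ≠ a1) (hbn : b0 ≠ b1) :
    IsTollSet ((⊤ : SimpleGraph (Fin n)) □ (⊤ : SimpleGraph (Fin m)))
      {((a0, b0) : Fin n × Fin m), (a1, b1)} := by
  set G := (⊤ : SimpleGraph (Fin n)) □ (⊤ : SimpleGraph (Fin m)) with hG
  have adj : ∀ p q : Fin n × Fin m,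
      G.Adj p q ↔ (p.1 ≠ q.1 ∧ p.2 = q.2) ∨ (p.2 ≠ q.2 ∧ p.1 = q.1) := by
    intro p q; rw [hG, boxProd_adj]; simp
  have huv : ¬ G.Adj (a0, b0) (a1, b1) := by
    rw [adj]; push_neg; exact ⟨fun _ => hbn, fun _ => han⟩
  have hne : ((a0, b0) : Fin n × Fin m) ≠ (a1, b1) := by
    simp [Prod.ext_iff]; intro h; exact absurd h han
  rintro ⟨a, b⟩
  refine ⟨(a0, b0), by simp, (a1, b1), by simp, ?_⟩
  by_cases ha0 : a = a0
  · by_cases hb0 : b = b0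
    · exact mem_toll2 G (a0, b1) _ ((adj _ _).mpr (Or.inr ⟨hbn, rfl⟩))
        ((adj _ _).mpr (Or.inl ⟨han, rfl⟩)) huv hne (Or.inl (by rw [ha0, hb0]))
    · by_cases hb1 : b = b1
      · exact mem_toll2 G (a0, b1) _ ((adj _ _).mpr (Or.inr ⟨hbn, rfl⟩))
          ((adj _ _).mpr (Or.inl ⟨han, rfl⟩)) huv hne (Or.inr (Or.inl (by rw [ha0, hb1])))
      · refine mem_toll3 G (a0, b) (a1, b) _
          ((adj _ _).mpr (Or.inr ⟨Ne.symm hb0, rfl⟩))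
          ((adj _ _).mpr (Or.inl ⟨han, rfl⟩))
          ((adj _ _).mpr (Or.inr ⟨hb1, rfl⟩)) ?_ ?_ huv hne (Or.inr (Or.inl (by rw [ha0])))
        · rw [adj]; push_neg; exact ⟨fun _ => Ne.symm hb0, fun _ => han⟩
        · rw [adj]; push_neg; exact ⟨fun _ => Ne.symm hb1, fun _ => Ne.symm han⟩
  · by_cases ha1 : a = a1
    · by_cases hb1 : b = b1
      · exact mem_toll2 G (a0, b1) _ ((adj _ _).mpr (Or.inr ⟨hbn, rfl⟩))
          ((adj _ _).mpr (Or.inl ⟨han, rfl⟩)) huv hne (Or.inr (Or.inr (by rw [ha1, hb1])))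
      · by_cases hb0 : b = b0
        · exact mem_toll2 G (a1, b0) _ ((adj _ _).mpr (Or.inl ⟨han, rfl⟩))
            ((adj _ _).mpr (Or.inr ⟨hbn, rfl⟩)) huv hne (Or.inr (Or.inl (by rw [ha1, hb0])))
        · refine mem_toll3 G (a0, b) (a1, b) _
            ((adj _ _).mpr (Or.inr ⟨Ne.symm hb0, rfl⟩))
            ((adj _ _).mpr (Or.inl ⟨han, rfl⟩))
            ((adj _ _).mpr (Or.inr ⟨hb1, rfl⟩)) ?_ ?_ huv hne
            (Or.inr (Or.inr (Or.inl (by rw [ha1]))))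
          · rw [adj]; push_neg; exact ⟨fun _ => Ne.symm hb0, fun _ => han⟩
          · rw [adj]; push_neg; exact ⟨fun _ => Ne.symm hb1, fun _ => Ne.symm han⟩
    · by_cases hb0 : b = b0
      · refine mem_toll3 G (a, b0) (a, b1) _
          ((adj _ _).mpr (Or.inl ⟨Ne.symm ha0, rfl⟩))
          ((adj _ _).mpr (Or.inr ⟨hbn, rfl⟩))
          ((adj _ _).mpr (Or.inl ⟨ha1, rfl⟩)) ?_ ?_ huv hne (Or.inr (Or.inl (by rw [hb0])))
        · rw [adj]; push_neg; exact ⟨fun _ => hbn, fun _ => Ne.symm ha0⟩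
        · rw [adj]; push_neg; exact ⟨fun _ => Ne.symm hbn, fun _ => Ne.symm ha1⟩
      · by_cases hb1 : b = b1
        · refine mem_toll3 G (a, b0) (a, b1) _
            ((adj _ _).mpr (Or.inl ⟨Ne.symm ha0, rfl⟩))
            ((adj _ _).mpr (Or.inr ⟨hbn, rfl⟩))
            ((adj _ _).mpr (Or.inl ⟨ha1, rfl⟩)) ?_ ?_ huv hne
            (Or.inr (Or.inr (Or.inl (by rw [hb1]))))
          · rw [adj]; push_neg; exact ⟨fun _ => hbn, fun _ => Ne.symm ha0⟩
          · rw [adj]; push_neg; exact ⟨fun _ => Ne.symm hbn, fun _ => Ne.symm ha1⟩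
        · refine mem_toll4 G (a0, b) (a, b) (a, b1) _
            ((adj _ _).mpr (Or.inr ⟨Ne.symm hb0, rfl⟩))
            ((adj _ _).mpr (Or.inl ⟨Ne.symm ha0, rfl⟩))
            ((adj _ _).mpr (Or.inr ⟨hb1, rfl⟩))
            ((adj _ _).mpr (Or.inl ⟨ha1, rfl⟩)) ?_ ?_ ?_ ?_ huv hne
            (Or.inr (Or.inr (Or.inl rfl)))
          · rw [adj]; push_neg; exact ⟨fun _ => Ne.symm hb0, fun _ => Ne.symm ha0⟩
          · rw [adj]; push_neg; exact ⟨fun _ => hbn, fun _ => Ne.symm ha0⟩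
          · rw [adj]; push_neg; exact ⟨fun _ => Ne.symm hb1, fun _ => Ne.symm han⟩
          · rw [adj]; push_neg; exact ⟨fun _ => Ne.symm hb1, fun _ => Ne.symm ha1⟩

theorem stmt4 (n m : ℕ) (hn : 2 ≤ n) (hm : 2 ≤ m) :
    tollNumber ((⊤ : SimpleGraph (Fin n)) □ (⊤ : SimpleGraph (Fin m))) = 2 := by
  have hne : ((⟨0, by omega⟩, ⟨0, by omega⟩) : Fin n × Fin m) ≠ (⟨1, by omega⟩, ⟨1, by omega⟩) := by
    simp [Prod.ext_iff]
  have h2mem : 2 ∈ {k | ∃ S : Set (Fin n × Fin m), S.Finite ∧ S.ncard = k ∧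
      IsTollSet ((⊤ : SimpleGraph (Fin n)) □ (⊤ : SimpleGraph (Fin m))) S} := by
    refine ⟨{(⟨0, by omega⟩, ⟨0, by omega⟩), (⟨1, by omega⟩, ⟨1, by omega⟩)},
      Set.toFinite _, Set.ncard_pair hne, ?_⟩
    exact key _ _ _ _ (by simp) (by simp)
  refine le_antisymm (Nat.sInf_le h2mem) (le_csInf ⟨2, h2mem⟩ ?_)
  rintro k ⟨S, hfin, hcard, hts⟩
  by_contra hk
  push_neg at hk
  interval_cases k
  · rw [Set.ncard_eq_zero hfin] at hcard
    obtain ⟨u, hu, -⟩ := hts (⟨0, by omega⟩, ⟨0, by omega⟩)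
    rw [hcard] at hu
    exact hu
  · obtain ⟨w, rfl⟩ := Set.ncard_eq_one.mp hcard
    have : Nontrivial (Fin n × Fin m) := by
      have : Nontrivial (Fin n) := ⟨⟨0, by omega⟩, ⟨1, by omega⟩, by simp⟩
      have : Nonempty (Fin m) := ⟨⟨0, by omega⟩⟩
      infer_instance
    obtain ⟨x, hx⟩ := exists_ne w
    obtain ⟨u, hu, v, hv, W, hW, hsup⟩ := hts x
    rw [Set.mem_singleton_iff] at hu hv
    subst hu; subst hv
    rcases hW with ⟨-, hlen⟩ | ⟨hadj, -⟩ | ⟨-, hww, -⟩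
    · rw [SimpleGraph.Walk.length_eq_zero_iff, SimpleGraph.Walk.nil_iff_eq_nil] at hlen
      subst hlen
      simp at hsup
      exact hx hsup
    · exact (SimpleGraph.irrefl _) hadj
    · exact hww rfl
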